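/- arXiv:math/0610433 — 2 statements merged into one kernel-verified Lean document; each statement's English description precedes it below -/
import Mathlib

section
/- Let K be a field, let q ∈ K be nonzero, let n ≥ 0, and let s₁,…,sₙ ∈ K satisfy sᵢ ≠ q²·s_j for all i ≠ j. Then for every function g of n variables in K, the q⁻¹-symmetrization of g equals a prefactor times the q-symmetrization of the reversed function: Sym̃ⁿ g(s₁,…,sₙ) = (∏_{1≤i<j≤n} (q·sᵢ − q⁻¹·s_j)/(q⁻¹·sᵢ − q·s_j)) · Sym̄ⁿ ĝ(s₁,…,sₙ), where ĝ(x₁,…,xₙ) := g(xₙ,…,x₁). -/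
open Finset

/-- The `q`-symmetrization of a function `F` of `n` variables:
`Sym̄ⁿ F(t₁,…,tₙ) = Σ_σ (∏_{ℓ<ℓ', σ(ℓ)>σ(ℓ')}
  (q⁻¹·t_{σ(ℓ')} − q·t_{σ(ℓ)})/(q·t_{σ(ℓ')} − q⁻¹·t_{σ(ℓ)})) · F(t_{σ(1)},…,t_{σ(n)})`. -/
noncomputable def qSym {K : Type*} [Field K] (q : K) {n : ℕ}
    (F : (Fin n → K) → K) (t : Fin n → K) : K :=
  ∑ σ : Equiv.Perm (Fin n),
    (∏ p ∈ Finset.univ.filter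
        (fun p : Fin n × Fin n => p.1 < p.2 ∧ σ p.2 < σ p.1),
      (q⁻¹ * t (σ p.2) - q * t (σ p.1)) / (q * t (σ p.2) - q⁻¹ * t (σ p.1))) *
    F (fun i => t (σ i))

/-- The `q⁻¹`-symmetrization of a function `g` of `n` variables:
`Sym̃ⁿ g(s₁,…,sₙ) = Σ_ν (∏_{ℓ<ℓ', ν⁻¹(ℓ)>ν⁻¹(ℓ')}
  (q·s_ℓ − q⁻¹·s_{ℓ'})/(q⁻¹·s_ℓ − q·s_{ℓ'})) · g(s_{ν(1)},…,s_{ν(n)})`. -/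
noncomputable def qInvSym {K : Type*} [Field K] (q : K) {n : ℕ}
    (g : (Fin n → K) → K) (s : Fin n → K) : K :=
  ∑ ν : Equiv.Perm (Fin n),
    (∏ p ∈ Finset.univ.filter
        (fun p : Fin n × Fin n => p.1 < p.2 ∧ ν⁻¹ p.2 < ν⁻¹ p.1),
      (q * s p.1 - q⁻¹ * s p.2) / (q⁻¹ * s p.1 - q * s p.2)) *
    g (fun i => s (ν i))

/-- the `q⁻¹`-symmetrization of `g` equals the prefactor
`∏_{i<j} (q·sᵢ − q⁻¹·s_j)/(q⁻¹·sᵢ − q·s_j)` times the `q`-symmetrization of the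
reversed function `ĝ(x₁,…,xₙ) = g(xₙ,…,x₁)`. -/
theorem qInvSym_eq_prefactor_mul_qSym_rev {K : Type*} [Field K] (q : K) (hq : q ≠ 0)
    (n : ℕ) (s : Fin n → K) (hs : ∀ i j : Fin n, i ≠ j → s i ≠ q ^ 2 * s j)
    (g : (Fin n → K) → K) :
    qInvSym q g s =
      (∏ p ∈ Finset.univ.filter (fun p : Fin n × Fin n => p.1 < p.2),
        (q * s p.1 - q⁻¹ * s p.2) / (q⁻¹ * s p.1 - q * s p.2)) *
      qSym q (fun x => g (fun i => x (Fin.rev i))) s := by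
  classical
  set A : Fin n → Fin n → K := fun a b => (q * s a - q⁻¹ * s b) / (q⁻¹ * s a - q * s b)
    with hA
  have hden : ∀ a b : Fin n, a ≠ b → q⁻¹ * s a - q * s b ≠ 0 := by
    intro a b hab h
    apply hs a b hab
    have h' : q⁻¹ * s a = q * s b := sub_eq_zero.mp h
    have h2 : q * (q⁻¹ * s a) = q * (q * s b) := by rw [h']
    rw [← mul_assoc, mul_inv_cancel₀ hq, one_mul] at h2
    rw [h2]; ring
  have hnum : ∀ a b : Fin n, a ≠ b → q * s a - q⁻¹ * s b ≠ 0 := by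
    intro a b hab h
    apply hs b a hab.symm
    have h' : q⁻¹ * s b = q * s a := (sub_eq_zero.mp h).symm
    have h2 : q * (q⁻¹ * s b) = q * (q * s a) := by rw [h']
    rw [← mul_assoc, mul_inv_cancel₀ hq, one_mul] at h2
    rw [h2]; ring
  have hAne : ∀ a b : Fin n, a ≠ b → A a b ≠ 0 := fun a b hab =>
    div_ne_zero (hnum a b hab) (hden a b hab)
  rw [qInvSym, qSym, Finset.mul_sum]
  refine Fintype.sum_equiv (Equiv.mulRight (Fin.revPerm : Equiv.Perm (Fin n))) _ _ ?_
  intro ν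
  set σ : Equiv.Perm (Fin n) := ν * Fin.revPerm with hσ
  have hσa : ∀ a : Fin n, σ a = ν (Fin.rev a) := fun a => rfl
  have hσinv : ∀ a : Fin n, σ⁻¹ a = Fin.rev (ν⁻¹ a) := by
    intro a
    rw [hσ, mul_inv_rev, Equiv.Perm.mul_apply]
    rfl
  have hνinvσ : ∀ a : Fin n, ν⁻¹ (σ a) = Fin.rev a := by
    intro a; rw [hσa, ← Equiv.Perm.mul_apply, inv_mul_cancel, Equiv.Perm.one_apply]
  have hg : (fun i => s (σ (Fin.rev i))) = fun i => s (ν i) := by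
    funext i; rw [hσa, Fin.rev_rev]
  -- reindex the q-sym product
  have key : (∏ p ∈ Finset.univ.filter
        (fun p : Fin n × Fin n => p.1 < p.2 ∧ σ p.2 < σ p.1),
      (q⁻¹ * s (σ p.2) - q * s (σ p.1)) / (q * s (σ p.2) - q⁻¹ * s (σ p.1)))
      = ∏ p ∈ Finset.univ.filter
          (fun p : Fin n × Fin n => p.1 < p.2 ∧ ν⁻¹ p.1 < ν⁻¹ p.2),
        (A p.1 p.2)⁻¹ := by
    refine Finset.prod_nbij' (fun p => (σ p.2, σ p.1)) (fun p => (σ⁻¹ p.2, σ⁻¹ p.1))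
      ?_ ?_ ?_ ?_ ?_
    · intro p hp
      simp only [mem_filter, mem_univ, true_and] at hp ⊢
      refine ⟨hp.2, ?_⟩
      rw [hνinvσ, hνinvσ, Fin.rev_lt_rev]
      exact hp.1
    · intro p hp
      simp only [mem_filter, mem_univ, true_and] at hp ⊢
      constructor
      · rw [hσinv, hσinv, Fin.rev_lt_rev]
        exact hp.2
      · rw [← Equiv.Perm.mul_apply, ← Equiv.Perm.mul_apply, mul_inv_cancel, Equiv.Perm.one_apply,
          Equiv.Perm.one_apply]
        exact hp.1
    · intro p _; simp
    · intro p _; simp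
    · intro p _
      rw [hA]
      simp only
      rw [inv_div]
  simp only [Equiv.coe_mulRight, ← hσ]
  rw [key]
  simp only [hg]
  -- now the scalar identity
  have hfilter : (Finset.univ.filter (fun p : Fin n × Fin n => p.1 < p.2)).filter
      (fun p => ν⁻¹ p.2 < ν⁻¹ p.1)
      = Finset.univ.filter (fun p : Fin n × Fin n => p.1 < p.2 ∧ ν⁻¹ p.2 < ν⁻¹ p.1) := by
    rw [Finset.filter_filter]
  have hfilter' : (Finset.univ.filter (fun p : Fin n × Fin n => p.1 < p.2)).filter
      (fun p => ¬ ν⁻¹ p.2 < ν⁻¹ p.1)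
      = Finset.univ.filter (fun p : Fin n × Fin n => p.1 < p.2 ∧ ν⁻¹ p.1 < ν⁻¹ p.2) := by
    rw [Finset.filter_filter]
    apply Finset.filter_congr
    intro p _
    constructor
    · rintro ⟨h1, h2⟩
      refine ⟨h1, lt_of_le_of_ne (not_lt.mp h2) ?_⟩
      intro hc
      exact absurd (ν⁻¹.injective hc) (ne_of_lt h1)
    · rintro ⟨h1, h2⟩
      exact ⟨h1, asymm h2⟩
  have hCsplit : (∏ p ∈ Finset.univ.filter (fun p : Fin n × Fin n => p.1 < p.2), A p.1 p.2)
      = (∏ p ∈ Finset.univ.filter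
            (fun p : Fin n × Fin n => p.1 < p.2 ∧ ν⁻¹ p.2 < ν⁻¹ p.1), A p.1 p.2)
        * ∏ p ∈ Finset.univ.filter
            (fun p : Fin n × Fin n => p.1 < p.2 ∧ ν⁻¹ p.1 < ν⁻¹ p.2), A p.1 p.2 := by
    rw [← hfilter, ← hfilter',
      Finset.prod_filter_mul_prod_filter_not]
  have hnz : (∏ p ∈ Finset.univ.filter
      (fun p : Fin n × Fin n => p.1 < p.2 ∧ ν⁻¹ p.1 < ν⁻¹ p.2), A p.1 p.2) ≠ 0 := by
    rw [Finset.prod_ne_zero_iff]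
    intro p hp
    simp only [mem_filter, mem_univ, true_and] at hp
    exact hAne p.1 p.2 (ne_of_lt hp.1)
  have hconv : ∀ (t : Finset (Fin n × Fin n)),
      (∏ p ∈ t, (q * s p.1 - q⁻¹ * s p.2) / (q⁻¹ * s p.1 - q * s p.2))
        = ∏ p ∈ t, A p.1 p.2 := fun t => rfl
  simp only [hconv]
  rw [Finset.prod_inv_distrib, hCsplit, mul_assoc, mul_inv_cancel_left₀ hnz]
end

section
/- Let K be a field, let q ∈ K be nonzero, let t₁,…,t_b ∈ K be pairwise distinct and satisfy tᵢ ≠ q²·t_m for all i, m ∈ {1,…,b}, and let t, w ∈ K satisfy: t ≠ w; t ≠ q²·tᵢ and w ≠ tᵢ for all i; and t_m ≠ w for all m. Then 1/(t − w) − Σ_{m=1}^{b} φ_{t_m}(t; t₁,…,t_b) · 1/(t_m − w) = (1/(t − w)) · ∏_{i=1}^{b} [ (t − tᵢ)/(w − tᵢ) · (q⁻¹·w − q·tᵢ)/(q⁻¹·t − q·tᵢ) ]. -/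
open Finset

/-- The rational function
`φ_{t_m}(t; t₁,…,t_b) = (∏_{i≠m} (t − tᵢ)/(tₘ − tᵢ)) · (∏ᵢ (q⁻¹·tₘ − q·tᵢ)/(q⁻¹·t − q·tᵢ))`. -/
noncomputable def phi {K : Type*} [Field K] (q : K) {b : ℕ} (tv : Fin b → K)
    (m : Fin b) (t : K) : K :=
  (∏ i ∈ Finset.univ.filter (fun i : Fin b => i ≠ m), (t - tv i) / (tv m - tv i)) *
  (∏ i : Fin b, (q⁻¹ * tv m - q * tv i) / (q⁻¹ * t - q * tv i))

open Polynomial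

/-- the elementary identity
`1/(t − w) − Σₘ φ_{tₘ}(t; t₁,…,t_b)·1/(tₘ − w)
  = (1/(t − w)) · ∏ᵢ (t − tᵢ)/(w − tᵢ) · (q⁻¹·w − q·tᵢ)/(q⁻¹·t − q·tᵢ)`. -/
theorem phi_kernel_identity {K : Type*} [Field K] (q : K) (hq : q ≠ 0) (b : ℕ)
    (tv : Fin b → K)
    (hdist : ∀ i m : Fin b, i ≠ m → tv i ≠ tv m)
    (hqt : ∀ i m : Fin b, tv i ≠ q ^ 2 * tv m)
    (t w : K) (htw : t ≠ w)
    (ht : ∀ i : Fin b, t ≠ q ^ 2 * tv i)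
    (hw : ∀ i : Fin b, w ≠ tv i)
    (hw' : ∀ m : Fin b, tv m ≠ w) :
    1 / (t - w) - ∑ m : Fin b, phi q tv m t * (1 / (tv m - w)) =
      1 / (t - w) *
        ∏ i : Fin b, ((t - tv i) / (w - tv i) * ((q⁻¹ * w - q * tv i) / (q⁻¹ * t - q * tv i))) := by
  classical
  have hinj : Function.Injective tv := fun i j hij => by
    by_contra hne; exact hdist i j hne hij
  have htw0 : t - w ≠ 0 := sub_ne_zero.mpr htw
  have hwv : ∀ i, w - tv i ≠ 0 := fun i => sub_ne_zero.mpr (hw i)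
  have hmw : ∀ m, tv m - w ≠ 0 := fun m => sub_ne_zero.mpr (hw' m)
  have hmm : ∀ m i : Fin b, i ≠ m → tv m - tv i ≠ 0 := fun m i h =>
    sub_ne_zero.mpr (hdist m i h.symm)
  have hPm : ∀ m : Fin b,
      (∏ i ∈ Finset.univ.filter (fun i : Fin b => i ≠ m), (tv m - tv i)) ≠ 0 := fun m =>
    Finset.prod_ne_zero_iff.mpr fun i hi => hmm m i (Finset.mem_filter.mp hi).2
  have hqx : ∀ x : K, (∀ i, x ≠ q ^ 2 * tv i) → ∀ i, q⁻¹ * x - q * tv i ≠ 0 := by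
    intro x hx i
    have h : q⁻¹ * x - q * tv i = q⁻¹ * (x - q ^ 2 * tv i) := by
      field_simp
    rw [h]
    exact mul_ne_zero (inv_ne_zero hq) (sub_ne_zero.mpr (hx i))
  have hqt0 : ∀ i, q⁻¹ * t - q * tv i ≠ 0 := hqx t ht
  have hA0 : (∏ i : Fin b, (q⁻¹ * t - q * tv i)) ≠ 0 :=
    Finset.prod_ne_zero_iff.mpr fun i _ => hqt0 i
  have hfac : ∀ x : K, q⁻¹ ^ b * ∏ i : Fin b, (x - q ^ 2 * tv i)
      = ∏ i : Fin b, (q⁻¹ * x - q * tv i) := by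
    intro x
    rw [show q⁻¹ ^ b = ∏ _i : Fin b, q⁻¹ by simp, ← Finset.prod_mul_distrib]
    refine Finset.prod_congr rfl fun i _ => ?_
    field_simp
  set c : Fin b → K := fun m =>
    (∏ i : Fin b, (q⁻¹ * tv m - q * tv i)) *
      (∏ i ∈ Finset.univ.filter (fun i : Fin b => i ≠ m), (tv m - tv i))⁻¹ *
      (tv m - w)⁻¹ with hc
  set P : K[X] :=
      C (q⁻¹ ^ b) * ∏ i : Fin b, (X - C (q ^ 2 * tv i)) -
      ∑ m : Fin b, C (c m) *
        ((X - C w) * ∏ i ∈ Finset.univ.filter (fun i : Fin b => i ≠ m), (X - C (tv i)))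
    with hPdef
  set Q : K[X] :=
      C (∏ i : Fin b, (q⁻¹ * w - q * tv i) / (w - tv i)) *
        ∏ i : Fin b, (X - C (tv i)) with hQdef
  have hevalP : ∀ x : K, P.eval x =
      (∏ i : Fin b, (q⁻¹ * x - q * tv i)) -
      ∑ m : Fin b, c m *
        ((x - w) * ∏ i ∈ Finset.univ.filter (fun i : Fin b => i ≠ m), (x - tv i)) := by
    intro x
    rw [← hfac x]
    simp [hPdef, eval_prod, eval_finset_sum]
  have hevalQ : ∀ x : K, Q.eval x =
      (∏ i : Fin b, (q⁻¹ * w - q * tv i) / (w - tv i)) * ∏ i : Fin b, (x - tv i) := by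
    intro x
    simp [hQdef, eval_prod]
  -- the finset of nodes
  have hws : w ∉ Finset.image tv Finset.univ := by
    simp only [Finset.mem_image, not_exists]
    rintro i ⟨-, hi⟩
    exact hw i hi.symm
  have hcard : (insert w (Finset.image tv Finset.univ)).card = b + 1 := by
    rw [Finset.card_insert_of_notMem hws, Finset.card_image_of_injective _ hinj,
      Finset.card_univ, Fintype.card_fin]
  have hdegprod : ∀ (s : Finset (Fin b)) (f : Fin b → K),
      (∏ i ∈ s, (X - C (f i)) : K[X]).degree = s.card := by
    intro s f
    rw [Polynomial.degree_prod]
    simp [Polynomial.degree_X_sub_C]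
  have hcf : ∀ m : Fin b, (Finset.univ.filter (fun i : Fin b => i ≠ m)).card = b - 1 := by
    intro m
    rw [Finset.filter_ne', Finset.card_erase_of_mem (Finset.mem_univ m),
      Finset.card_univ, Fintype.card_fin]
  have hdegP : P.degree ≤ b := by
    refine (degree_sub_le _ _).trans (max_le ?_ ?_)
    · refine (degree_mul_le _ _).trans ?_
      rw [hdegprod Finset.univ, Finset.card_univ, Fintype.card_fin]
      refine le_trans (add_le_add degree_C_le le_rfl) ?_
      simp
    · refine (degree_sum_le _ _).trans (Finset.sup_le fun m _ => ?_)
      refine (degree_mul_le _ _).trans ?_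
      refine le_trans (add_le_add degree_C_le (degree_mul_le _ _)) ?_
      rw [zero_add, degree_X_sub_C, hdegprod, hcf m]
      have h1 : (1 : WithBot ℕ) + ((b - 1 : ℕ) : WithBot ℕ) = ((b : ℕ) : WithBot ℕ) := by
        rw [← Nat.cast_one (R := WithBot ℕ), ← Nat.cast_add]
        have hb : 0 < b := m.pos
        exact congrArg _ (by omega : 1 + (b - 1) = b)
      rw [h1]
  have hdegQ : Q.degree ≤ b := by
    refine (degree_mul_le _ _).trans ?_
    rw [hdegprod Finset.univ, Finset.card_univ, Fintype.card_fin]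
    refine le_trans (add_le_add degree_C_le le_rfl) ?_
    simp
  have hPQ : P = Q := by
    apply Polynomial.eq_of_degrees_lt_of_eval_finset_eq (insert w (Finset.image tv Finset.univ))
    · rw [hcard]
      exact lt_of_le_of_lt hdegP (by exact_mod_cast Nat.lt_succ_self b)
    · rw [hcard]
      exact lt_of_le_of_lt hdegQ (by exact_mod_cast Nat.lt_succ_self b)
    · intro x hx
      rw [hevalP, hevalQ]
      rcases Finset.mem_insert.mp hx with rfl | hx
      · have hz : (∑ m : Fin b, c m *
            ((x - x) * ∏ i ∈ Finset.univ.filter (fun i : Fin b => i ≠ m), (x - tv i))) = 0 := by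
          simp
        rw [hz, sub_zero, ← Finset.prod_mul_distrib]
        exact Finset.prod_congr rfl fun i _ => (div_mul_cancel₀ _ (hwv i)).symm
      · obtain ⟨k, -, rfl⟩ := Finset.mem_image.mp hx
        have hz0 : (∏ i : Fin b, (tv k - tv i)) = 0 :=
          Finset.prod_eq_zero (Finset.mem_univ k) (sub_self _)
        rw [hz0, mul_zero, sub_eq_zero]
        rw [Finset.sum_eq_single k]
        · have h1 := hPm k
          have h2 := hmw k
          rw [hc]
          field_simp
        · intro m _ hmk
          have hz : (∏ i ∈ Finset.univ.filter (fun i : Fin b => i ≠ m), (tv k - tv i)) = 0 :=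
            Finset.prod_eq_zero (Finset.mem_filter.mpr ⟨Finset.mem_univ k, hmk.symm⟩) (sub_self _)
          rw [hz, mul_zero, mul_zero]
        · intro h
          exact absurd (Finset.mem_univ k) h
  have hE := congrArg (Polynomial.eval t) hPQ
  rw [hevalP, hevalQ] at hE
  have hL : ∀ m : Fin b, phi q tv m t * (1 / (tv m - w)) =
      c m * ((t - w) * ∏ i ∈ Finset.univ.filter (fun i : Fin b => i ≠ m), (t - tv i)) /
        ((t - w) * ∏ i : Fin b, (q⁻¹ * t - q * tv i)) := by
    intro m
    have h1 := hPm m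
    have h2 := hmw m
    have hA := hA0
    unfold phi
    simp only [hc]
    rw [Finset.prod_div_distrib, Finset.prod_div_distrib]
    generalize (∏ i ∈ Finset.univ.filter (fun i : Fin b => i ≠ m), (t - tv i)) = N1
    generalize hD1 : (∏ i ∈ Finset.univ.filter (fun i : Fin b => i ≠ m), (tv m - tv i)) = D1
    generalize (∏ i : Fin b, (q⁻¹ * tv m - q * tv i)) = N2
    generalize hD2 : (∏ i : Fin b, (q⁻¹ * t - q * tv i)) = D2
    rw [hD1] at h1
    rw [hD2] at hA
    field_simp
  have hW0 : (∏ i : Fin b, (w - tv i)) ≠ 0 :=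
    Finset.prod_ne_zero_iff.mpr fun i _ => hwv i
  calc 1 / (t - w) - ∑ m : Fin b, phi q tv m t * (1 / (tv m - w))
      = ((∏ i : Fin b, (q⁻¹ * t - q * tv i)) -
          ∑ m : Fin b, c m *
            ((t - w) * ∏ i ∈ Finset.univ.filter (fun i : Fin b => i ≠ m), (t - tv i))) /
          ((t - w) * ∏ i : Fin b, (q⁻¹ * t - q * tv i)) := by
        rw [sub_div, Finset.sum_div]
        congr 1
        · rw [mul_comm (t - w), div_mul_cancel_left₀ hA0, one_div]
        · exact Finset.sum_congr rfl fun m _ => hL m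
    _ = ((∏ i : Fin b, (q⁻¹ * w - q * tv i) / (w - tv i)) * ∏ i : Fin b, (t - tv i)) /
          ((t - w) * ∏ i : Fin b, (q⁻¹ * t - q * tv i)) := by rw [hE]
    _ = 1 / (t - w) *
          ∏ i : Fin b, ((t - tv i) / (w - tv i) *
            ((q⁻¹ * w - q * tv i) / (q⁻¹ * t - q * tv i))) := by
        have hA := hA0
        rw [Finset.prod_mul_distrib, Finset.prod_div_distrib, Finset.prod_div_distrib,
          Finset.prod_div_distrib]
        generalize (∏ i : Fin b, (t - tv i)) = T
        generalize hWp : (∏ i : Fin b, (w - tv i)) = W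
        generalize (∏ i : Fin b, (q⁻¹ * w - q * tv i)) = N
        generalize hD2 : (∏ i : Fin b, (q⁻¹ * t - q * tv i)) = D2
        rw [hWp] at hW0
        rw [hD2] at hA
        field_simp
end
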